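/- Let n ≥ 2. There exist constants C, c > 0, depending only on n, such that for every X' ∈ ℝ^{n-1} with X' ≠ 0 and every τ > 0, the function z' ↦ (z₁/|z'|ⁿ)(e^{-|X'-z'|²/τ} - e^{-|X'|²/τ}) is Lebesgue integrable on the ball {z' ∈ ℝ^{n-1} : |z'| ≤ |X'|/10}, and | ∫_{|z'| ≤ |X'|/10} (z₁/|z'|ⁿ)(e^{-|X'-z'|²/τ} - e^{-|X'|²/τ}) dz' | ≤ C e^{-c |X'|²/τ}. -/

import Mathlib

open MeasureTheory Real Set

open scoped ENNReal

private lemma abs_exp_sub_exp_le (x y : ℝ) :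
    |Real.exp x - Real.exp y| ≤ |x - y| * Real.exp (max x y) := by
  wlog h : y ≤ x generalizing x y
  · rw [abs_sub_comm, abs_sub_comm x y, max_comm]
    exact this y x (le_of_not_ge h)
  rw [abs_of_nonneg (sub_nonneg.2 (Real.exp_le_exp.2 h)), abs_of_nonneg (sub_nonneg.2 h),
    max_eq_left h]
  have h1 : Real.exp y = Real.exp x * Real.exp (y - x) := by
    rw [← Real.exp_add]; ring_nf
  have h2 := Real.add_one_le_exp (y - x)
  nlinarith [Real.exp_pos x]

private lemma coord_le (m : ℕ) (z : EuclideanSpace ℝ (Fin m)) (i : Fin m) : |z i| ≤ ‖z‖ := by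
  rw [EuclideanSpace.norm_eq, ← Real.sqrt_sq_eq_abs]
  apply Real.sqrt_le_sqrt
  have := Finset.single_le_sum (f := fun j => ‖z j‖^2) (fun j _ => sq_nonneg _) (Finset.mem_univ i)
  simpa [Real.norm_eq_abs, sq_abs] using this

private lemma lint_bound (n : ℕ) (hn : 2 ≤ n) (R : ℝ) (hR : 0 < R) :
    ∫⁻ z in Metric.closedBall (0 : EuclideanSpace ℝ (Fin (n-1))) R,
        ENNReal.ofReal ((‖z‖ ^ (n-2))⁻¹) ≤
      ENNReal.ofReal (2 ^ (n-1) * R) *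
        volume (Metric.ball (0 : EuclideanSpace ℝ (Fin (n-1))) 1) := by
  set E := EuclideanSpace ℝ (Fin (n-1)) with hE
  have hfr : Module.finrank ℝ E = n - 1 := finrank_euclideanSpace_fin
  rcases eq_or_lt_of_le hn with h2 | h3
  · -- n = 2
    subst h2
    simp only [Nat.sub_self, pow_zero, inv_one, ENNReal.ofReal_one]
    calc ∫⁻ _ in Metric.closedBall (0 : E) R, (1 : ℝ≥0∞)
        = volume (Metric.closedBall (0 : E) R) := by
          rw [setLIntegral_const, one_mul]
      _ = ENNReal.ofReal (R ^ Module.finrank ℝ E) * volume (Metric.ball (0 : E) 1) :=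
          Measure.addHaar_closedBall _ _ hR.le
      _ ≤ ENNReal.ofReal (2 ^ (2-1) * R) * volume (Metric.ball (0 : E) 1) := by
          gcongr
          rw [hfr]
          norm_num
          linarith
  · -- n ≥ 3
    have hn3 : 3 ≤ n := h3
    set A : ℕ → Set E := fun k =>
      Metric.closedBall 0 (R / 2 ^ k) \ Metric.closedBall 0 (R / 2 ^ (k+1)) with hA
    have cover : Metric.closedBall (0 : E) R ⊆ {0} ∪ ⋃ k, A k := by
      intro z hz
      rcases eq_or_ne z 0 with rfl | hz0
      · exact Or.inl rfl
      have hzpos : 0 < ‖z‖ := norm_pos_iff.2 hz0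
      have hzR : ‖z‖ ≤ R := mem_closedBall_zero_iff.1 hz
      have hex : ∃ k : ℕ, R / 2 ^ (k+1) < ‖z‖ := by
        obtain ⟨j, hj⟩ := pow_unbounded_of_one_lt (R / ‖z‖) (one_lt_two (α := ℝ))
        refine ⟨j, ?_⟩
        rw [div_lt_iff₀ (by positivity)] at hj ⊢
        nlinarith [pow_pos (two_pos (α := ℝ)) j, pow_succ (2:ℝ) j, hzpos]
      classical
      set k₀ := Nat.find hex with hk₀
      have hk1 : R / 2 ^ (k₀+1) < ‖z‖ := Nat.find_spec hex
      have hk2 : ‖z‖ ≤ R / 2 ^ k₀ := by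
        rcases Nat.eq_zero_or_pos k₀ with h0 | hpos
        · rw [h0]; simpa using hzR
        · have := Nat.find_min hex (m := k₀ - 1) (by omega)
          push_neg at this
          have : R / 2 ^ (k₀ - 1 + 1) ≥ ‖z‖ := this
          rwa [Nat.sub_add_cancel hpos] at this
      exact Or.inr (mem_iUnion.2 ⟨k₀, ⟨mem_closedBall_zero_iff.2 hk2,
        fun h => absurd (mem_closedBall_zero_iff.1 h) (not_le.2 hk1)⟩⟩)
    have key : ∀ k : ℕ, ∫⁻ z in A k, ENNReal.ofReal ((‖z‖ ^ (n-2))⁻¹) ≤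
        ENNReal.ofReal (2 ^ (n-2) * R * (2⁻¹) ^ k) * volume (Metric.ball (0 : E) 1) := by
      intro k
      have hrk : (0:ℝ) < R / 2 ^ (k+1) := by positivity
      have hbd : ∀ z ∈ A k, ENNReal.ofReal ((‖z‖ ^ (n-2))⁻¹) ≤
          ENNReal.ofReal (((R / 2 ^ (k+1)) ^ (n-2))⁻¹) := by
        intro z hz
        have h1 : R / 2 ^ (k+1) < ‖z‖ := by
          by_contra h
          exact hz.2 (mem_closedBall_zero_iff.2 (not_lt.1 h))
        refine ENNReal.ofReal_le_ofReal ?_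
        refine inv_anti₀ (by positivity) ?_
        exact pow_le_pow_left₀ hrk.le h1.le _
      calc ∫⁻ z in A k, ENNReal.ofReal ((‖z‖ ^ (n-2))⁻¹)
          ≤ ∫⁻ _ in A k, ENNReal.ofReal (((R / 2 ^ (k+1)) ^ (n-2))⁻¹) :=
            setLIntegral_mono' (measurableSet_closedBall.diff measurableSet_closedBall) hbd
        _ = ENNReal.ofReal (((R / 2 ^ (k+1)) ^ (n-2))⁻¹) * volume (A k) := setLIntegral_const _ _
        _ ≤ ENNReal.ofReal (((R / 2 ^ (k+1)) ^ (n-2))⁻¹) *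
              volume (Metric.closedBall (0:E) (R / 2 ^ k)) := by
            gcongr
            exact diff_subset
        _ = ENNReal.ofReal (((R / 2 ^ (k+1)) ^ (n-2))⁻¹) *
              (ENNReal.ofReal ((R / 2 ^ k) ^ Module.finrank ℝ E) *
                volume (Metric.ball (0 : E) 1)) := by
            rw [Measure.addHaar_closedBall _ _ (by positivity)]
        _ = ENNReal.ofReal (2 ^ (n-2) * R * (2⁻¹) ^ k) * volume (Metric.ball (0 : E) 1) := by
            rw [← mul_assoc, ← ENNReal.ofReal_mul (by positivity)]
            congr 2
            rw [hfr]
            have hexp : n - 1 = (n-2) + 1 := by omega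
            rw [hexp]
            field_simp
            rw [pow_succ, div_pow, div_pow, div_pow, pow_succ (2:ℝ) k, mul_pow]
            field_simp
            ring
    calc ∫⁻ z in Metric.closedBall (0 : E) R, ENNReal.ofReal ((‖z‖ ^ (n-2))⁻¹)
        ≤ ∫⁻ z in ({0} ∪ ⋃ k, A k), ENNReal.ofReal ((‖z‖ ^ (n-2))⁻¹) :=
          lintegral_mono_set cover
      _ ≤ (∫⁻ z in ({0} : Set E), ENNReal.ofReal ((‖z‖ ^ (n-2))⁻¹)) +
            ∫⁻ z in (⋃ k, A k), ENNReal.ofReal ((‖z‖ ^ (n-2))⁻¹) := lintegral_union_le _ _ _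
      _ ≤ 0 + ∑' k, ∫⁻ z in A k, ENNReal.ofReal ((‖z‖ ^ (n-2))⁻¹) := by
          gcongr
          · rw [lintegral_singleton, norm_zero, zero_pow (show n - 2 ≠ 0 by omega),
              _root_.inv_zero, ENNReal.ofReal_zero, zero_mul]
          · exact lintegral_iUnion_le _ _
      _ ≤ ∑' k, ENNReal.ofReal (2 ^ (n-2) * R * (2⁻¹) ^ k) * volume (Metric.ball (0 : E) 1) := by
          rw [zero_add]
          exact ENNReal.tsum_le_tsum key
      _ = ENNReal.ofReal (2 ^ (n-1) * R) * volume (Metric.ball (0 : E) 1) := by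
          have h1 : ∀ k : ℕ, ENNReal.ofReal (2 ^ (n-2) * R * (2⁻¹) ^ k) =
              ENNReal.ofReal (2 ^ (n-2) * R) * (2⁻¹ : ℝ≥0∞) ^ k := by
            intro k
            rw [ENNReal.ofReal_mul (by positivity), ENNReal.ofReal_pow (by norm_num),
              ENNReal.ofReal_inv_of_pos (by norm_num), ENNReal.ofReal_ofNat]
          calc ∑' k, ENNReal.ofReal (2 ^ (n-2) * R * (2⁻¹) ^ k) * volume (Metric.ball (0 : E) 1)
              = ∑' k : ℕ, (ENNReal.ofReal (2 ^ (n-2) * R) * volume (Metric.ball (0 : E) 1)) *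
                  (2⁻¹ : ℝ≥0∞) ^ k := by
                refine tsum_congr fun k => ?_
                rw [h1]; ring
            _ = (ENNReal.ofReal (2 ^ (n-2) * R) * volume (Metric.ball (0 : E) 1)) *
                  ∑' k : ℕ, (2⁻¹ : ℝ≥0∞) ^ k := ENNReal.tsum_mul_left
            _ = (ENNReal.ofReal (2 ^ (n-2) * R) * ENNReal.ofReal 2) *
                  volume (Metric.ball (0 : E) 1) := by
                rw [ENNReal.tsum_geometric, ENNReal.one_sub_inv_two, inv_inv]
                simp only [ENNReal.ofReal_ofNat]
                ring
            _ = ENNReal.ofReal (2 ^ (n-1) * R) * volume (Metric.ball (0 : E) 1) := by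
                rw [← ENNReal.ofReal_mul (by positivity)]
                congr 2
                rw [show n - 1 = (n-2) + 1 by omega, pow_succ]
                ring

private lemma int_bound (n : ℕ) (hn : 2 ≤ n) (R : ℝ) (hR : 0 < R) :
    IntegrableOn (fun z : EuclideanSpace ℝ (Fin (n-1)) => (‖z‖ ^ (n-2))⁻¹)
      (Metric.closedBall 0 R) volume ∧
    ∫ z in Metric.closedBall (0 : EuclideanSpace ℝ (Fin (n-1))) R, (‖z‖ ^ (n-2))⁻¹ ≤
      2 ^ (n-1) * R * (volume (Metric.ball (0 : EuclideanSpace ℝ (Fin (n-1))) 1)).toReal := by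
  set E := EuclideanSpace ℝ (Fin (n-1))
  set g : E → ℝ := fun z => (‖z‖ ^ (n-2))⁻¹ with hg
  have hmeas : Measurable g := (measurable_norm.pow_const _).inv
  have hnn : ∀ z : E, 0 ≤ g z := fun z => by positivity
  have hRHSne : ENNReal.ofReal (2 ^ (n-1) * R) * volume (Metric.ball (0 : E) 1) ≠ ∞ :=
    (ENNReal.mul_lt_top ENNReal.ofReal_lt_top measure_ball_lt_top).ne
  have hint : IntegrableOn g (Metric.closedBall 0 R) volume := by
    refine ⟨hmeas.aestronglyMeasurable, ?_⟩
    rw [hasFiniteIntegral_iff_ofReal (ae_of_all _ hnn)]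
    exact lt_of_le_of_lt (lint_bound n hn R hR) hRHSne.lt_top
  refine ⟨hint, ?_⟩
  rw [integral_eq_lintegral_of_nonneg_ae (ae_of_all _ hnn) hmeas.aestronglyMeasurable]
  calc (∫⁻ z in Metric.closedBall (0 : E) R, ENNReal.ofReal (g z)).toReal
      ≤ (ENNReal.ofReal (2 ^ (n-1) * R) * volume (Metric.ball (0 : E) 1)).toReal :=
        ENNReal.toReal_mono hRHSne (lint_bound n hn R hR)
    _ = 2 ^ (n-1) * R * (volume (Metric.ball (0 : E) 1)).toReal := by
        rw [ENNReal.toReal_mul, ENNReal.toReal_ofReal (by positivity)]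

set_option maxHeartbeats 1000000 in
/-- Estimate of `J₂`: `|∫_{|z'| ≤ |X'|/10} (z₁/|z'|ⁿ)(e^{-|X'-z'|²/τ} - e^{-|X'|²/τ}) dz'|
≤ C e^{-c|X'|²/τ}`. -/
theorem stmt_5 (n : ℕ) (hn : 2 ≤ n) :
    ∃ C c : ℝ, 0 < C ∧ 0 < c ∧
      ∀ X' : EuclideanSpace ℝ (Fin (n-1)), X' ≠ 0 → ∀ τ : ℝ, 0 < τ →
        IntegrableOn
          (fun z' : EuclideanSpace ℝ (Fin (n-1)) =>
            (z' ⟨0, by omega⟩ / ‖z'‖^n) *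
              (Real.exp (-‖X' - z'‖^2/τ) - Real.exp (-‖X'‖^2/τ)))
          {z' : EuclideanSpace ℝ (Fin (n-1)) | ‖z'‖ ≤ ‖X'‖/10} volume ∧
        |∫ z' in {z' : EuclideanSpace ℝ (Fin (n-1)) | ‖z'‖ ≤ ‖X'‖/10},
            (z' ⟨0, by omega⟩ / ‖z'‖^n) *
              (Real.exp (-‖X' - z'‖^2/τ) - Real.exp (-‖X'‖^2/τ))| ≤
          C * Real.exp (-c * ‖X'‖^2/τ) := by
  have hidx : 0 < n - 1 := by omega
  have hVpos : 0 < (volume (Metric.ball (0 : EuclideanSpace ℝ (Fin (n-1))) 1)).toReal :=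
    ENNReal.toReal_pos (Metric.measure_ball_pos _ _ one_pos).ne' measure_ball_lt_top.ne
  set V : ℝ := (volume (Metric.ball (0 : EuclideanSpace ℝ (Fin (n-1))) 1)).toReal with hV
  refine ⟨2 ^ (n-1) * V, 2/5, by positivity, by norm_num, ?_⟩
  intro X' hX' τ hτ
  have htpos : 0 < ‖X'‖ := norm_pos_iff.2 hX'
  have hRpos : 0 < ‖X'‖ / 10 := by positivity
  have hSet : {z' : EuclideanSpace ℝ (Fin (n-1)) | ‖z'‖ ≤ ‖X'‖/10} =
      Metric.closedBall (0 : EuclideanSpace ℝ (Fin (n-1))) (‖X'‖/10) := by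
    ext z
    simp [Metric.mem_closedBall, dist_zero_right]
  rw [hSet]
  have hmeas : Measurable (fun z' : EuclideanSpace ℝ (Fin (n-1)) =>
      (z' ⟨0, hidx⟩ / ‖z'‖^n) *
        (Real.exp (-‖X' - z'‖^2/τ) - Real.exp (-‖X'‖^2/τ))) := by
    have hcoord : Measurable fun z : EuclideanSpace ℝ (Fin (n-1)) => z ⟨0, hidx⟩ :=
      (measurable_pi_apply _).comp (WithLp.measurable_ofLp 2 _)
    have hnorm : Measurable fun z : EuclideanSpace ℝ (Fin (n-1)) => ‖z‖ ^ n :=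
      measurable_norm.pow_const n
    have hrest : Measurable fun z : EuclideanSpace ℝ (Fin (n-1)) =>
        Real.exp (-‖X' - z‖^2/τ) - Real.exp (-‖X'‖^2/τ) :=
      ((((measurable_const.sub measurable_id).norm.pow_const 2).neg.div_const τ).exp).sub
        measurable_const
    exact (hcoord.div hnorm).mul hrest
  set D : ℝ := 3 * (‖X'‖/τ) * Real.exp (-(4/5) * (‖X'‖^2/τ)) with hD
  have hDnn : 0 ≤ D := by positivity
  have hbound : ∀ z ∈ Metric.closedBall (0 : EuclideanSpace ℝ (Fin (n-1))) (‖X'‖/10),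
      |(z ⟨0, hidx⟩ / ‖z‖^n) * (Real.exp (-‖X' - z‖^2/τ) - Real.exp (-‖X'‖^2/τ))| ≤
        D * (‖z‖ ^ (n-2))⁻¹ := by
    intro z hz
    have hzR : ‖z‖ ≤ ‖X'‖ / 10 := mem_closedBall_zero_iff.1 hz
    have hznn : (0:ℝ) ≤ ‖z‖ := norm_nonneg z
    have h1 : |z ⟨0, hidx⟩| ≤ ‖z‖ := coord_le _ z _
    have hlow : 9/10 * ‖X'‖ ≤ ‖X' - z‖ := by
      have := norm_sub_norm_le X' z
      linarith
    have ha : (9/10 * ‖X'‖)^2 ≤ ‖X' - z‖^2 := by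
      have h0 : (0:ℝ) ≤ 9/10 * ‖X'‖ := by positivity
      nlinarith [norm_nonneg (X' - z)]
    have hexpand : ‖X' - z‖^2 = ‖X'‖^2 - 2 * (inner ℝ X' z) + ‖z‖^2 := norm_sub_sq_real X' z
    have hinner' := abs_le.1 (abs_real_inner_le_norm X' z)
    have hdiff : |(-‖X' - z‖^2/τ) - (-‖X'‖^2/τ)| ≤ 3*‖X'‖*‖z‖/τ := by
      have heq : (-‖X' - z‖^2/τ) - (-‖X'‖^2/τ) = (‖X'‖^2 - ‖X' - z‖^2)/τ := by ring
      rw [heq, abs_div, abs_of_pos hτ]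
      rw [div_le_div_iff_of_pos_right hτ, abs_le]
      constructor <;> nlinarith [hinner'.1, hinner'.2]
    have hmax : max (-‖X' - z‖^2/τ) (-‖X'‖^2/τ) ≤ -(4/5) * (‖X'‖^2/τ) := by
      rw [show -(4/5) * (‖X'‖^2/τ) = (-(4/5) * ‖X'‖^2)/τ by ring, max_le_iff,
        div_le_div_iff_of_pos_right hτ, div_le_div_iff_of_pos_right hτ]
      constructor <;> nlinarith
    have hexp : |Real.exp (-‖X' - z‖^2/τ) - Real.exp (-‖X'‖^2/τ)| ≤
        (3*‖X'‖*‖z‖/τ) * Real.exp (-(4/5) * (‖X'‖^2/τ)) := by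
      refine (abs_exp_sub_exp_le _ _).trans ?_
      have hnn1 : (0:ℝ) ≤ 3*‖X'‖*‖z‖/τ := div_nonneg (by positivity) hτ.le
      exact mul_le_mul hdiff (Real.exp_le_exp.2 hmax) (Real.exp_pos _).le hnn1
    rcases eq_or_ne (‖z‖) 0 with hz0 | hz0
    · have hzz : z = 0 := norm_eq_zero.1 hz0
      subst hzz
      have : ((0 : EuclideanSpace ℝ (Fin (n-1))) ⟨0, hidx⟩ : ℝ) = 0 := rfl
      rw [this, zero_div, zero_mul, abs_zero]
      positivity
    · have hzpos : 0 < ‖z‖ := lt_of_le_of_ne hznn (Ne.symm hz0)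
      have e1 : |(z ⟨0, hidx⟩ / ‖z‖^n) *
          (Real.exp (-‖X' - z‖^2/τ) - Real.exp (-‖X'‖^2/τ))| ≤
          (‖z‖ * ((3*‖X'‖*‖z‖/τ) * Real.exp (-(4/5) * (‖X'‖^2/τ)))) / ‖z‖^n := by
        rw [abs_mul, abs_div, abs_of_nonneg (pow_nonneg hznn n), div_mul_eq_mul_div]
        gcongr
      refine e1.trans_eq ?_
      have hpow : ‖z‖^n = ‖z‖^2 * ‖z‖^(n-2) := by
        rw [← pow_add]
        congr 1
        omega
      rw [hpow, hD]
      have hzn2 : ‖z‖^(n-2) ≠ 0 := pow_ne_zero _ hz0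
      field_simp
  have hIntg : IntegrableOn (fun z : EuclideanSpace ℝ (Fin (n-1)) => D * (‖z‖^(n-2))⁻¹)
      (Metric.closedBall 0 (‖X'‖/10)) volume :=
    ((int_bound n hn _ hRpos).1.const_mul D)
  have hIntf : IntegrableOn (fun z' : EuclideanSpace ℝ (Fin (n-1)) =>
      (z' ⟨0, hidx⟩ / ‖z'‖^n) *
        (Real.exp (-‖X' - z'‖^2/τ) - Real.exp (-‖X'‖^2/τ)))
      (Metric.closedBall 0 (‖X'‖/10)) volume := by
    refine Integrable.mono' hIntg hmeas.aestronglyMeasurable ?_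
    refine (ae_restrict_iff' measurableSet_closedBall).2 (ae_of_all _ ?_)
    intro z hz
    simpa only [Real.norm_eq_abs] using hbound z hz
  refine ⟨hIntf, ?_⟩
  have habs : |∫ z' in Metric.closedBall (0 : EuclideanSpace ℝ (Fin (n-1))) (‖X'‖/10),
      (z' ⟨0, hidx⟩ / ‖z'‖^n) *
        (Real.exp (-‖X' - z'‖^2/τ) - Real.exp (-‖X'‖^2/τ))| ≤
      ∫ z' in Metric.closedBall (0 : EuclideanSpace ℝ (Fin (n-1))) (‖X'‖/10),
        D * (‖z'‖ ^ (n-2))⁻¹ := by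
    rw [← Real.norm_eq_abs]
    refine (norm_integral_le_integral_norm _).trans ?_
    refine setIntegral_mono_on hIntf.norm hIntg measurableSet_closedBall ?_
    intro z hz
    simpa only [Real.norm_eq_abs] using hbound z hz
  refine habs.trans ?_
  rw [integral_const_mul]
  have hle : ∫ z in Metric.closedBall (0 : EuclideanSpace ℝ (Fin (n-1))) (‖X'‖/10),
      (‖z‖ ^ (n-2))⁻¹ ≤ 2 ^ (n-1) * (‖X'‖/10) * V := (int_bound n hn _ hRpos).2
  have hintnn : 0 ≤ ∫ z in Metric.closedBall (0 : EuclideanSpace ℝ (Fin (n-1))) (‖X'‖/10),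
      (‖z‖ ^ (n-2))⁻¹ := by
    apply integral_nonneg
    intro z
    positivity
  calc D * ∫ z in Metric.closedBall (0 : EuclideanSpace ℝ (Fin (n-1))) (‖X'‖/10),
        (‖z‖ ^ (n-2))⁻¹
      ≤ D * (2 ^ (n-1) * (‖X'‖/10) * V) := mul_le_mul_of_nonneg_left hle hDnn
    _ ≤ 2 ^ (n-1) * V * Real.exp (-(2/5) * ‖X'‖^2/τ) := by
        have hid : Real.exp ((2/5) * (‖X'‖^2/τ)) * Real.exp (-(4/5) * (‖X'‖^2/τ)) =
            Real.exp (-(2/5) * ‖X'‖^2/τ) := by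
          rw [← Real.exp_add]
          congr 1
          ring
        have hkey : ‖X'‖^2/τ ≤ (5/2) * Real.exp ((2/5) * (‖X'‖^2/τ)) := by
          have := Real.add_one_le_exp ((2/5) * (‖X'‖^2/τ))
          nlinarith
        have he1 : (0:ℝ) < Real.exp (-(4/5) * (‖X'‖^2/τ)) := Real.exp_pos _
        have hue : ‖X'‖^2/τ * Real.exp (-(4/5) * (‖X'‖^2/τ)) ≤
            (5/2) * Real.exp (-(2/5) * ‖X'‖^2/τ) := by
          calc ‖X'‖^2/τ * Real.exp (-(4/5) * (‖X'‖^2/τ))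
              ≤ ((5/2) * Real.exp ((2/5) * (‖X'‖^2/τ))) * Real.exp (-(4/5) * (‖X'‖^2/τ)) :=
                mul_le_mul_of_nonneg_right hkey he1.le
            _ = (5/2) * (Real.exp ((2/5) * (‖X'‖^2/τ)) * Real.exp (-(4/5) * (‖X'‖^2/τ))) := by
                ring
            _ = (5/2) * Real.exp (-(2/5) * ‖X'‖^2/τ) := by rw [hid]
        have heq : D * (2 ^ (n-1) * (‖X'‖/10) * V) =
            (3/10) * (2 ^ (n-1) * V) * (‖X'‖^2/τ * Real.exp (-(4/5) * (‖X'‖^2/τ))) := by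
          rw [hD]
          field_simp
        rw [heq]
        have hpows : (0:ℝ) < 2 ^ (n-1) := by positivity
        calc (3/10) * (2 ^ (n-1) * V) * (‖X'‖^2/τ * Real.exp (-(4/5) * (‖X'‖^2/τ)))
            ≤ (3/10) * (2 ^ (n-1) * V) * ((5/2) * Real.exp (-(2/5) * ‖X'‖^2/τ)) :=
              mul_le_mul_of_nonneg_left hue (by positivity)
          _ ≤ 2 ^ (n-1) * V * Real.exp (-(2/5) * ‖X'‖^2/τ) := by
              nlinarith [mul_pos (mul_pos hpows hVpos) (Real.exp_pos (-(2/5) * ‖X'‖^2/τ))]
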